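/- Let U₁, U₂ ∈ U(2) with U₁U₂ ≠ U₂U₁, and let A ∈ GL(2,ℂ) satisfy AU₁A⁻¹ ∈ U(2) and AU₂A⁻¹ ∈ U(2). Then A = rU for some positive real r and U ∈ U(2). -/

import Mathlib

open Matrix

private lemma ext2 (M N : Matrix (Fin 2) (Fin 2) ℂ) (h00 : M 0 0 = N 0 0)
    (h01 : M 0 1 = N 0 1) (h10 : M 1 0 = N 1 0) (h11 : M 1 1 = N 1 1) : M = N := by
  ext i j; fin_cases i <;> fin_cases j <;> assumption

/-- If a 2×2 complex matrix `P` is not scalar, then any two matrices commuting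
with `P` commute with each other. -/
private lemma commute_of_commute_nonscalar
    (P X Y : Matrix (Fin 2) (Fin 2) ℂ)
    (hX : P * X = X * P) (hY : P * Y = Y * P)
    (hns : ¬ ∃ c : ℂ, P = c • (1 : Matrix (Fin 2) (Fin 2) ℂ)) :
    X * Y = Y * X := by
  have eX00 := congrFun (congrFun hX 0) 0
  have eX01 := congrFun (congrFun hX 0) 1
  have eX10 := congrFun (congrFun hX 1) 0
  have eY00 := congrFun (congrFun hY 0) 0
  have eY01 := congrFun (congrFun hY 0) 1
  have eY10 := congrFun (congrFun hY 1) 0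
  simp only [Matrix.mul_apply, Fin.sum_univ_two] at eX00 eX01 eX10 eY00 eY01 eY10
  have hcase : ¬ (P 0 1 = 0 ∧ P 1 0 = 0 ∧ P 0 0 = P 1 1) := by
    rintro ⟨hb, hc, had⟩
    exact hns ⟨P 0 0, ext2 _ _ (by simp [Matrix.one_apply]) (by simp [Matrix.one_apply, hb])
      (by simp [Matrix.one_apply, hc]) (by simp [Matrix.one_apply, had.symm])⟩
  by_cases hb : P 0 1 ≠ 0
  · have hx10 : X 1 0 = P 1 0 * X 0 1 / P 0 1 := by
      field_simp; linear_combination eX00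
    have hx11 : X 1 1 = X 0 0 - X 0 1 * (P 0 0 - P 1 1) / P 0 1 := by
      field_simp; linear_combination eX01
    have hy10 : Y 1 0 = P 1 0 * Y 0 1 / P 0 1 := by
      field_simp; linear_combination eY00
    have hy11 : Y 1 1 = Y 0 0 - Y 0 1 * (P 0 0 - P 1 1) / P 0 1 := by
      field_simp; linear_combination eY01
    refine ext2 _ _ ?_ ?_ ?_ ?_ <;>
      · simp only [Matrix.mul_apply, Fin.sum_univ_two]
        simp only [hx10, hx11, hy10, hy11]
        field_simp
        all_goals ring
  · push_neg at hb
    by_cases hc : P 1 0 ≠ 0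
    · have hx01 : X 0 1 = 0 := by
        have h0 : X 0 1 * P 1 0 = 0 := by linear_combination -eX00 + X 1 0 * hb
        exact (mul_eq_zero.mp h0).resolve_right hc
      have hx11 : X 1 1 = X 0 0 - X 1 0 * (P 0 0 - P 1 1) / P 1 0 := by
        field_simp; linear_combination -eX10
      have hy01 : Y 0 1 = 0 := by
        have h0 : Y 0 1 * P 1 0 = 0 := by linear_combination -eY00 + Y 1 0 * hb
        exact (mul_eq_zero.mp h0).resolve_right hc
      have hy11 : Y 1 1 = Y 0 0 - Y 1 0 * (P 0 0 - P 1 1) / P 1 0 := by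
        field_simp; linear_combination -eY10
      refine ext2 _ _ ?_ ?_ ?_ ?_ <;>
        · simp only [Matrix.mul_apply, Fin.sum_univ_two]
          simp only [hx01, hx11, hy01, hy11]
          field_simp
          try ring
    · push_neg at hc
      have had : P 0 0 ≠ P 1 1 := fun h => hcase ⟨hb, hc, h⟩
      have had' : P 0 0 - P 1 1 ≠ 0 := sub_ne_zero.mpr had
      have hx01 : X 0 1 = 0 := by
        have : X 0 1 * (P 0 0 - P 1 1) = 0 := by
          linear_combination eX01 + (X 0 0 - X 1 1) * hb
        exact (mul_eq_zero.mp this).resolve_right had'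
      have hx10 : X 1 0 = 0 := by
        have : X 1 0 * (P 0 0 - P 1 1) = 0 := by
          linear_combination -eX10 + (X 0 0 - X 1 1) * hc
        exact (mul_eq_zero.mp this).resolve_right had'
      have hy01 : Y 0 1 = 0 := by
        have : Y 0 1 * (P 0 0 - P 1 1) = 0 := by
          linear_combination eY01 + (Y 0 0 - Y 1 1) * hb
        exact (mul_eq_zero.mp this).resolve_right had'
      have hy10 : Y 1 0 = 0 := by
        have : Y 1 0 * (P 0 0 - P 1 1) = 0 := by
          linear_combination -eY10 + (Y 0 0 - Y 1 1) * hc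
        exact (mul_eq_zero.mp this).resolve_right had'
      refine ext2 _ _ ?_ ?_ ?_ ?_ <;>
        · simp only [Matrix.mul_apply, Fin.sum_univ_two, hx01, hx10, hy01, hy10]
          ring
/-- If `A U A⁻¹` is unitary with `U` unitary and `A` invertible, then
`star A * A` commutes with `U`. -/
private lemma comm_aux (U A : Matrix (Fin 2) (Fin 2) ℂ)
    (hU : U ∈ Matrix.unitaryGroup (Fin 2) ℂ) (hA : IsUnit A.det)
    (h : A * U * A⁻¹ ∈ Matrix.unitaryGroup (Fin 2) ℂ) :
    (star A * A) * U = U * (star A * A) := by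
  have h1 : A⁻¹ * A = 1 := nonsing_inv_mul A hA
  have hu : U * star U = 1 := mem_unitaryGroup_iff.mp hU
  have hm : star A⁻¹ * (star U * (star A * (A * (U * A⁻¹)))) = 1 := by
    have := mem_unitaryGroup_iff'.mp h
    simpa [Matrix.star_mul, mul_assoc] using this
  have hinv : star A * star A⁻¹ = 1 := by rw [← Matrix.star_mul, h1, star_one]
  have key : star U * (star A * A) * U = star A * A := by
    have h3 : star A * (star A⁻¹ * (star U * (star A * (A * (U * A⁻¹))))) * A
        = star A * A := by rw [hm]; simp
    calc star U * (star A * A) * U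
        = (star A * star A⁻¹) * star U * (star A * A) * U * (A⁻¹ * A) := by
          rw [hinv, h1]; simp
      _ = star A * (star A⁻¹ * (star U * (star A * (A * (U * A⁻¹))))) * A := by
          simp only [mul_assoc]
      _ = star A * A := h3
  calc (star A * A) * U = (U * star U) * (star A * A) * U := by rw [hu]; simp
    _ = U * (star U * (star A * A) * U) := by simp only [mul_assoc]
    _ = U * (star A * A) := by rw [key]

/-- If `U₁, U₂ ∈ U(2)` do not commute and `A ∈ GL(2,ℂ)` conjugates
both into `U(2)`, then `A = r • U` for some positive real `r` and unitary `U`. -/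
theorem stmt3 (U₁ U₂ A : Matrix (Fin 2) (Fin 2) ℂ)
    (hU₁ : U₁ ∈ Matrix.unitaryGroup (Fin 2) ℂ)
    (hU₂ : U₂ ∈ Matrix.unitaryGroup (Fin 2) ℂ)
    (hnc : U₁ * U₂ ≠ U₂ * U₁)
    (hA : IsUnit A.det)
    (h₁ : A * U₁ * A⁻¹ ∈ Matrix.unitaryGroup (Fin 2) ℂ)
    (h₂ : A * U₂ * A⁻¹ ∈ Matrix.unitaryGroup (Fin 2) ℂ) :
    ∃ (r : ℝ) (U : Matrix (Fin 2) (Fin 2) ℂ), 0 < r ∧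
      U ∈ Matrix.unitaryGroup (Fin 2) ℂ ∧ A = (r : ℂ) • U := by
  have hc₁ := comm_aux U₁ A hU₁ hA h₁
  have hc₂ := comm_aux U₂ A hU₂ hA h₂
  have hsc : ∃ c : ℂ, star A * A = c • (1 : Matrix (Fin 2) (Fin 2) ℂ) := by
    by_contra hns
    exact hnc (commute_of_commute_nonscalar (star A * A) U₁ U₂ hc₁ hc₂ hns)
  obtain ⟨c, hc⟩ := hsc
  have h00 : c = (star A * A) 0 0 := by rw [hc]; simp [Matrix.one_apply]
  have hcol : A 0 0 ≠ 0 ∨ A 1 0 ≠ 0 := by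
    by_contra hcon
    push_neg at hcon
    rw [Matrix.det_fin_two, hcon.1, hcon.2] at hA
    simp at hA
  set s : ℝ := Complex.normSq (A 0 0) + Complex.normSq (A 1 0) with hs_def
  have hcs : c = (s : ℂ) := by
    rw [h00]
    simp only [Matrix.mul_apply, Fin.sum_univ_two]
    rw [show (star A) 0 0 = star (A 0 0) from rfl, show (star A) 0 1 = star (A 1 0) from rfl]
    simp only [Complex.star_def, hs_def, Complex.ofReal_add,
      Complex.normSq_eq_conj_mul_self]
  have hs_pos : 0 < s := by
    rcases hcol with h | h
    · have := Complex.normSq_pos.mpr h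
      have := Complex.normSq_nonneg (A 1 0)
      linarith
    · have := Complex.normSq_pos.mpr h
      have := Complex.normSq_nonneg (A 0 0)
      linarith
  set r : ℝ := Real.sqrt s with hr_def
  have hr_pos : 0 < r := Real.sqrt_pos.mpr hs_pos
  have hr_ne : (r : ℂ) ≠ 0 := by exact_mod_cast hr_pos.ne'
  have hr2 : (r : ℂ) * (r : ℂ) = (s : ℂ) := by
    rw [← Complex.ofReal_mul]
    norm_cast
    exact Real.mul_self_sqrt hs_pos.le
  refine ⟨r, (r : ℂ)⁻¹ • A, hr_pos, ?_, ?_⟩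
  · rw [mem_unitaryGroup_iff']
    have hstar : star ((r : ℂ)⁻¹ • A) = (r : ℂ)⁻¹ • star A := by
      rw [star_smul]
      congr 1
      simp [Complex.conj_ofReal]
    rw [hstar, Matrix.smul_mul, Matrix.mul_smul, smul_smul, hc, smul_smul, hcs]
    rw [show (r : ℂ)⁻¹ * (r : ℂ)⁻¹ * (s : ℂ) = ((r : ℂ) * (r : ℂ))⁻¹ * (s : ℂ) by ring]
    rw [hr2, inv_mul_cancel₀ (by exact_mod_cast hs_pos.ne' : (s : ℂ) ≠ 0), one_smul]
  · rw [smul_smul, mul_inv_cancel₀ hr_ne, one_smul]
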